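/- Let Z₀ and Z₁ be independent standard normal random variables (each with law gaussianReal 0 1). Then for every t ≥ 0, P(Z₀² + (max(Z₁,0))² ≤ t) = (1/2)·P(Z₀² ≤ t) + (1/2)·P(Z₀² + Z₁² ≤ t). That is, the law of Z₀² + (Z₁⁺)² is the 1/2–1/2 mixture of the chi-squared distributions with one and two degrees of freedom. -/

import Mathlib

open MeasureTheory ProbabilityTheory

lemma neg_map_gaussian' {Ω : Type*} [MeasurableSpace Ω] {μ : Measure Ω} {Z : Ω → ℝ}
    (hZm : Measurable Z) (hZ : μ.map Z = gaussianReal 0 1) :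
    μ.map (fun ω => -Z ω) = gaussianReal 0 1 := by
  have h1 : (fun ω => -Z ω) = (fun x : ℝ => -1 * x) ∘ Z := by funext ω; simp
  rw [h1, ← Measure.map_map (by fun_prop) hZm, hZ, gaussianReal_map_const_mul]
  norm_num

lemma gaussian_zero_singleton : gaussianReal 0 1 {(0:ℝ)} = 0 :=
  gaussianReal_absolutelyContinuous 0 one_ne_zero (by simp)

/-- For independent standard normal random variables `Z₀, Z₁`, the law of `Z₀² + (Z₁⁺)²`
is the 1/2–1/2 mixture of the chi-squared distributions with one and two degrees of
freedom: `P(Z₀² + (Z₁⁺)² ≤ t) = (1/2)·P(Z₀² ≤ t) + (1/2)·P(Z₀² + Z₁² ≤ t)` for `t ≥ 0`. -/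
theorem sq_plus_pos_part_sq_gaussian_cdf
    {Ω : Type*} [MeasurableSpace Ω] (μ : Measure Ω) [IsProbabilityMeasure μ]
    (Z₀ Z₁ : Ω → ℝ) (hZ₀meas : Measurable Z₀) (hZ₁meas : Measurable Z₁)
    (hZ₀ : μ.map Z₀ = gaussianReal 0 1) (hZ₁ : μ.map Z₁ = gaussianReal 0 1)
    (hindep : IndepFun Z₀ Z₁ μ) :
    ∀ t : ℝ, 0 ≤ t →
      μ {ω | (Z₀ ω) ^ 2 + (max (Z₁ ω) 0) ^ 2 ≤ t}
        = (1 / 2) * μ {ω | (Z₀ ω) ^ 2 ≤ t}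
          + (1 / 2) * μ {ω | (Z₀ ω) ^ 2 + (Z₁ ω) ^ 2 ≤ t} := by
  intro t _
  set ν := gaussianReal 0 1 with hν
  have hZ₁' : μ.map (fun ω => -Z₁ ω) = ν := neg_map_gaussian' hZ₁meas hZ₁
  -- joint laws
  have hJ : μ.map (fun ω => (Z₀ ω, Z₁ ω)) = ν.prod ν := by
    rw [(indepFun_iff_map_prod_eq_prod_map_map hZ₀meas.aemeasurable
      hZ₁meas.aemeasurable).mp hindep, hZ₀, hZ₁]
  have hindep' : IndepFun Z₀ (fun ω => -Z₁ ω) μ :=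
    hindep.comp measurable_id measurable_neg
  have hJ' : μ.map (fun ω => (Z₀ ω, -Z₁ ω)) = ν.prod ν := by
    rw [(indepFun_iff_map_prod_eq_prod_map_map hZ₀meas.aemeasurable
      (show Measurable (fun ω => -Z₁ ω) from hZ₁meas.neg).aemeasurable).mp hindep', hZ₀, hZ₁']
  -- μ {Z₁ = 0} = 0
  have hzero : μ {ω | Z₁ ω = 0} = 0 := by
    have : μ {ω | Z₁ ω = 0} = (μ.map Z₁) {(0:ℝ)} := by
      rw [Measure.map_apply hZ₁meas (measurableSet_singleton 0)]; rfl
    rw [this, hZ₁]; exact gaussian_zero_singleton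
  -- μ {Z₁ < 0} = 1/2
  have hneg_lt : μ {ω | Z₁ ω < 0} = μ {ω | 0 < Z₁ ω} := by
    have h1 : μ {ω | Z₁ ω < 0} = ν (Set.Iio 0) := by
      rw [← hZ₁, Measure.map_apply hZ₁meas measurableSet_Iio]; rfl
    have h2 : μ {ω | 0 < Z₁ ω} = ν (Set.Iio 0) := by
      rw [← hZ₁', Measure.map_apply (show Measurable (fun ω => -Z₁ ω) from hZ₁meas.neg) measurableSet_Iio]
      congr 1; ext ω; simp
    rw [h1, h2]
  have hhalf : μ {ω | Z₁ ω < 0} = 1 / 2 := by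
    have hsplit : μ {ω | Z₁ ω < 0} + μ {ω | 0 ≤ Z₁ ω} = 1 := by
      rw [← measure_union _ (measurableSet_le measurable_const hZ₁meas :
        MeasurableSet {ω | 0 ≤ Z₁ ω})]
      · rw [← measure_univ (μ := μ)]; congr 1; ext ω
        simp [lt_or_ge (Z₁ ω) 0]
      · intro s hs1 hs2 ω hω
        exact absurd (show (0:ℝ) ≤ Z₁ ω from hs2 hω) (not_le.mpr (hs1 hω))
    have hge : μ {ω | 0 ≤ Z₁ ω} = μ {ω | Z₁ ω < 0} := by
      have : μ {ω | 0 ≤ Z₁ ω} = μ {ω | 0 < Z₁ ω} := by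
        refine le_antisymm ?_ (measure_mono fun ω hω => (le_of_lt hω : (0:ℝ) ≤ Z₁ ω))
        calc μ {ω | 0 ≤ Z₁ ω} ≤ μ ({ω | 0 < Z₁ ω} ∪ {ω | Z₁ ω = 0}) := by
              apply measure_mono; intro ω hω
              rcases eq_or_lt_of_le (show (0:ℝ) ≤ Z₁ ω from hω) with h | h
              · exact Or.inr h.symm
              · exact Or.inl h
          _ ≤ μ {ω | 0 < Z₁ ω} + μ {ω | Z₁ ω = 0} := measure_union_le _ _
          _ = μ {ω | 0 < Z₁ ω} := by rw [hzero, add_zero]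
      rw [this, ← hneg_lt]
    rw [hge] at hsplit
    exact (ENNReal.eq_div_iff two_ne_zero ENNReal.ofNat_ne_top).mpr
      (by rw [two_mul]; exact hsplit)
  -- Term 1 : independence
  have hterm1 : μ ({ω | (Z₀ ω) ^ 2 ≤ t} ∩ {ω | Z₁ ω < 0})
      = 1 / 2 * μ {ω | (Z₀ ω) ^ 2 ≤ t} := by
    have hpre : {ω | (Z₀ ω) ^ 2 ≤ t} = Z₀ ⁻¹' {x : ℝ | x ^ 2 ≤ t} := rfl
    have hpre2 : {ω | Z₁ ω < 0} = Z₁ ⁻¹' (Set.Iio 0) := rfl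
    rw [hpre, hpre2, hindep.measure_inter_preimage_eq_mul _ _
      (measurableSet_le (by fun_prop) measurable_const) measurableSet_Iio]
    rw [← hpre, ← hpre2, hhalf, mul_comm]
  -- Term 2 : symmetry
  set S := {ω | (Z₀ ω) ^ 2 + (Z₁ ω) ^ 2 ≤ t} with hS
  have hSm : MeasurableSet S := measurableSet_le (by fun_prop) measurable_const
  set A : Set (ℝ × ℝ) := {p | p.1 ^ 2 + p.2 ^ 2 ≤ t ∧ 0 ≤ p.2} with hA
  have hAm : MeasurableSet A := by
    apply MeasurableSet.inter
    · exact measurableSet_le ((measurable_fst.pow_const 2).add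
        (measurable_snd.pow_const 2)) measurable_const
    · exact measurableSet_le measurable_const measurable_snd
  have h1 : μ (S ∩ {ω | 0 ≤ Z₁ ω}) = (ν.prod ν) A := by
    rw [← hJ, Measure.map_apply (hZ₀meas.prodMk hZ₁meas) hAm]
    rfl
  have h2 : μ (S ∩ {ω | Z₁ ω ≤ 0}) = (ν.prod ν) A := by
    rw [← hJ', Measure.map_apply (show Measurable (fun ω => (Z₀ ω, -Z₁ ω)) from hZ₀meas.prodMk hZ₁meas.neg) hAm]
    congr 1; ext ω
    simp only [Set.mem_inter_iff, Set.mem_setOf_eq, Set.mem_preimage, hA, hS]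
    constructor
    · rintro ⟨h, h'⟩; exact ⟨by rw [neg_pow]; simpa using h, by linarith⟩
    · rintro ⟨h, h'⟩
      refine ⟨by rw [neg_pow] at h; simpa using h, by linarith⟩
  have h3 : μ (S ∩ {ω | Z₁ ω ≤ 0}) = μ (S ∩ {ω | Z₁ ω < 0}) := by
    refine le_antisymm ?_ (measure_mono (Set.inter_subset_inter_right _
      fun ω hω => (le_of_lt hω : Z₁ ω ≤ 0)))
    calc μ (S ∩ {ω | Z₁ ω ≤ 0}) ≤ μ ((S ∩ {ω | Z₁ ω < 0}) ∪ {ω | Z₁ ω = 0}) := by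
          apply measure_mono; rintro ω ⟨hωS, hω⟩
          rcases eq_or_lt_of_le (show Z₁ ω ≤ 0 from hω) with h | h
          · exact Or.inr h
          · exact Or.inl ⟨hωS, h⟩
      _ ≤ μ (S ∩ {ω | Z₁ ω < 0}) + μ {ω | Z₁ ω = 0} := measure_union_le _ _
      _ = μ (S ∩ {ω | Z₁ ω < 0}) := by rw [hzero, add_zero]
  have hsplitS : μ S = μ (S ∩ {ω | 0 ≤ Z₁ ω}) + μ (S ∩ {ω | Z₁ ω < 0}) := by
    rw [← measure_union _ (hSm.inter (measurableSet_lt hZ₁meas measurable_const :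
      MeasurableSet {ω | Z₁ ω < 0}))]
    · congr 1; ext ω
      simp only [Set.mem_inter_iff, Set.mem_union, Set.mem_setOf_eq]
      constructor
      · intro h; rcases le_or_gt 0 (Z₁ ω) with h' | h'
        · exact Or.inl ⟨h, h'⟩
        · exact Or.inr ⟨h, h'⟩
      · rintro (⟨h, _⟩ | ⟨h, _⟩) <;> exact h
    · rintro s hs1 hs2 ω hω
      exact absurd (show Z₁ ω < 0 from (hs2 hω).2) (not_lt.mpr (show (0:ℝ) ≤ Z₁ ω from (hs1 hω).2))
  have hterm2 : μ (S ∩ {ω | 0 ≤ Z₁ ω}) = 1 / 2 * μ S := by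
    have h4 : μ S = 2 * μ (S ∩ {ω | 0 ≤ Z₁ ω}) := by
      rw [hsplitS, ← h3, h2, h1, two_mul]
    have h5 : μ (S ∩ {ω | 0 ≤ Z₁ ω}) = μ S / 2 :=
      (ENNReal.eq_div_iff two_ne_zero ENNReal.ofNat_ne_top).mpr h4.symm
    rw [h5, ENNReal.div_eq_inv_mul, one_div]
  -- combine
  have hmain : {ω | (Z₀ ω) ^ 2 + (max (Z₁ ω) 0) ^ 2 ≤ t}
      = ({ω | (Z₀ ω) ^ 2 ≤ t} ∩ {ω | Z₁ ω < 0}) ∪ (S ∩ {ω | 0 ≤ Z₁ ω}) := by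
    ext ω
    simp only [Set.mem_setOf_eq, Set.mem_union, Set.mem_inter_iff, hS]
    rcases lt_or_ge (Z₁ ω) 0 with h | h
    · rw [max_eq_right (le_of_lt h)]
      simp [h, not_le.mpr h]
    · rw [max_eq_left h]
      simp [h, not_lt.mpr h]
  rw [hmain, measure_union _ (hSm.inter (measurableSet_le measurable_const hZ₁meas :
    MeasurableSet {ω | 0 ≤ Z₁ ω})), hterm1, hterm2]
  rintro s hs1 hs2 ω hω
  exact absurd (show (0:ℝ) ≤ Z₁ ω from (hs2 hω).2) (not_le.mpr (show Z₁ ω < 0 from (hs1 hω).2))
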